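/- Let F be a field and n > 0. Let M be an affine subspace of n×n matrices over F all of whose elements are invertible. Then the dimension of M is at most n(n−1)/2. -/

import Mathlib

open Matrix Module

variable {F : Type} [Field F]

/-- Existence of a basis of `Fin n → F` whose 0-th vector is a prescribed nonzero vector. -/
lemma exists_basis_zero {n : ℕ} {v : Fin (n+1) → F} (hv : v ≠ 0) :
    ∃ b : Basis (Fin (n+1)) F (Fin (n+1) → F), b 0 = v := by
  have hli : LinearIndepOn F id ({v} : Set (Fin (n+1) → F)) :=
    (linearIndepOn_singleton_iff F).2 hv
  let b0 := Basis.extend hli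
  have hvmem : v ∈ hli.extend (Set.subset_univ _) :=
    hli.subset_extend _ rfl
  let e : (hli.extend (Set.subset_univ _)) ≃ Fin (n+1) :=
    b0.indexEquiv (Pi.basisFun F (Fin (n+1)))
  let e' := e.trans (Equiv.swap (e ⟨v, hvmem⟩) 0)
  refine ⟨b0.reindex e', ?_⟩
  rw [Basis.reindex_apply]
  have : e'.symm 0 = ⟨v, hvmem⟩ := by
    simp only [e', Equiv.symm_trans_apply, Equiv.symm_swap, Equiv.swap_apply_right]
    exact e.symm_apply_apply _
  rw [this]
  exact Basis.extend_apply_self hli _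

variable {F : Type} [Field F]

/-- Key covering lemma: one cannot assign to every point `x` outside a proper subspace `W`
a nonzero functional `f_x` vanishing at `x` such that `f_x y * f_y x = 0` for all pairs. -/
lemma lemR (F : Type) [Field F] : ∀ (k : ℕ) (E : Type) [AddCommGroup E] [Module F E]
    [FiniteDimensional F E], finrank F E = k → ∀ (W : Submodule F E), W ≠ ⊤ →
    ∀ (G : ∀ x : E, x ∉ W → (E →ₗ[F] F)),
    (∀ x hx, G x hx ≠ 0) → (∀ x hx, G x hx x = 0) →
    (∀ x hx y hy, G x hx y * G y hy x = 0) → False := by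
  intro k
  induction k using Nat.strong_induction_on with
  | _ k IH =>
    intro E _ _ _ hrk W hW G hne hself hpair
    -- pick x₀ ∉ W
    obtain ⟨x₀, hx₀⟩ : ∃ x₀, x₀ ∉ W := by
      by_contra h
      push_neg at h
      exact hW (Submodule.eq_top_iff'.2 h)
    have hx₀0 : x₀ ≠ 0 := fun h => hx₀ (h ▸ W.zero_mem)
    set f₀ := G x₀ hx₀ with hf₀
    set W' := LinearMap.ker f₀ with hW'
    have hx₀W' : x₀ ∈ W' := hself x₀ hx₀
    -- everyone outside W' kills x₀
    have key : ∀ y (hyW' : y ∉ W') (hyW : y ∉ W), G y hyW x₀ = 0 := by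
      intro y hyW' hyW
      have := hpair x₀ hx₀ y hyW
      rcases mul_eq_zero.1 this with h | h
      · exact absurd h hyW'
      · exact h
    -- complement of span {x₀}
    obtain ⟨H, hcompl⟩ := Submodule.exists_isCompl (Submodule.span F {x₀})
    have hsup : Submodule.span F {x₀} ⊔ H = ⊤ := hcompl.sup_eq_top
    have hrkH : finrank F H + 1 = k := by
      have := Submodule.finrank_sup_add_finrank_inf_eq (Submodule.span F {x₀}) H
      rw [hsup, hcompl.inf_eq_bot] at this
      simp [finrank_span_singleton hx₀0, hrk] at this
      omega
    -- W'' in H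
    have hHW' : ¬ (H ≤ W') := by
      intro hle
      have : (⊤ : Submodule F E) ≤ W' := by
        rw [← hsup]
        refine sup_le ?_ hle
        rw [Submodule.span_le, Set.singleton_subset_iff]
        exact hx₀W'
      have : W' = ⊤ := top_le_iff.1 this
      exact hne x₀ hx₀ (LinearMap.ker_eq_top.1 this)
    set W'' : Submodule F H := W'.comap H.subtype with hW''def
    have hW''top : W'' ≠ ⊤ := by
      obtain ⟨h, hH, hnW'⟩ := SetLike.not_le_iff_exists.1 hHW'
      intro htop
      have : (⟨h, hH⟩ : H) ∈ W'' := htop ▸ Submodule.mem_top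
      exact hnW' this
    -- lift
    classical
    set lift : H → E := fun h => if ((h : E) ∈ W) then (h : E) + x₀ else (h : E) with hliftdef
    have hliftW : ∀ h : H, lift h ∉ W := by
      intro h
      by_cases hc : (h : E) ∈ W
      · simp only [hliftdef, if_pos hc]
        intro hmem
        exact hx₀ (by simpa using W.sub_mem hmem hc)
      · simpa only [hliftdef, if_neg hc] using hc
    have hgl : ∀ (h : H) (g : E →ₗ[F] F), g x₀ = 0 → g (lift h) = g (h : E) := by
      intro h g hg
      by_cases hc : (h : E) ∈ W <;> simp [hliftdef, hc, hg]
    have hliftW' : ∀ h : H, h ∉ W'' → lift h ∉ W' := by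
      intro h hh hmem
      apply hh
      by_cases hc : (h : E) ∈ W
      · simp only [hliftdef, if_pos hc] at hmem
        have : (h : E) ∈ W' := by simpa using W'.sub_mem hmem hx₀W'
        exact this
      · have : (h : E) ∈ W' := by simpa only [hliftdef, if_neg hc] using hmem
        exact this
    -- new system on H
    set G' : ∀ h : H, h ∉ W'' → (H →ₗ[F] F) :=
      fun h hh => (G (lift h) (hliftW h)).comp H.subtype with hG'def
    have hkill : ∀ (h : H) (hh : h ∉ W''), G (lift h) (hliftW h) x₀ = 0 :=
      fun h hh => key _ (hliftW' h hh) _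
    refine IH (finrank F H) (by omega) H rfl W'' hW''top G' ?_ ?_ ?_
    · -- nonzero
      intro h hh hzero
      apply hne (lift h) (hliftW h)
      have hker : (⊤ : Submodule F E) ≤ LinearMap.ker (G (lift h) (hliftW h)) := by
        rw [← hsup]
        refine sup_le ?_ ?_
        · rw [Submodule.span_le, Set.singleton_subset_iff]
          exact hkill h hh
        · intro y hy
          have := LinearMap.congr_fun hzero ⟨y, hy⟩
          simpa [hG'def] using this
      exact LinearMap.ker_eq_top.1 (top_le_iff.1 hker)
    · -- self
      intro h hh
      have h1 : G (lift h) (hliftW h) (h : E) = G (lift h) (hliftW h) (lift h) :=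
        by rw [hgl h _ (hkill h hh)]
      simp only [hG'def, LinearMap.comp_apply, Submodule.subtype_apply]
      rw [h1, hself]
    · -- pairs
      intro h1 hh1 h2 hh2
      simp only [hG'def, LinearMap.comp_apply, Submodule.subtype_apply]
      rw [← hgl h2 (G (lift h1) (hliftW h1)) (hkill h1 hh1), ← hgl h1 (G (lift h2) (hliftW h2)) (hkill h2 hh2)]
      exact hpair _ _ _ _

variable {n : ℕ}


lemma unit_mulVec_eq_zero {C : Matrix (Fin n) (Fin n) F} (hC : IsUnit C)
    {w : Fin n → F} (h : C.mulVec w = 0) : w = 0 := by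
  obtain ⟨u, rfl⟩ := hC
  have h1 : ((↑u⁻¹ : Matrix (Fin n) (Fin n) F) * (u : Matrix (Fin n) (Fin n) F)) = 1 := u.inv_mul
  calc w = (1 : Matrix (Fin n) (Fin n) F).mulVec w := by simp
  _ = (↑u⁻¹ : Matrix (Fin n) (Fin n) F).mulVec ((u : Matrix (Fin n) (Fin n) F).mulVec w) := by
      rw [mulVec_mulVec, h1]
  _ = 0 := by rw [h]; simp

lemma vecMulVec_mulVec' (x f w : Fin n → F) :
    (vecMulVec x f).mulVec w = (f ⬝ᵥ w) • x := by
  funext i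
  simp [vecMulVec, Matrix.mulVec, dotProduct, Finset.mul_sum, mul_comm, mul_left_comm]

variable {M : AffineSubspace F (Matrix (Fin n) (Fin n) F)}

lemma mem_add_dir {A B : Matrix (Fin n) (Fin n) F} (hA : A ∈ M) (hB : B ∈ M.direction) :
    A + B ∈ M := by
  have := AffineSubspace.vadd_mem_of_mem_direction hB hA
  simpa [add_comm] using this

/-- L1 : if `x fᵀ` is a direction of an all-invertible affine space, `A ∈ M`, `A x' = x`,
then `f ⬝ᵥ x' = 0`. -/
lemma L1 (hinv : ∀ A ∈ M, IsUnit A) {A : Matrix (Fin n) (Fin n) F} (hA : A ∈ M)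
    {x f x' : Fin n → F} (hr : vecMulVec x f ∈ M.direction) (hx' : A.mulVec x' = x) :
    f ⬝ᵥ x' = 0 := by
  by_contra hc
  set c := f ⬝ᵥ x' with hcdef
  have hC : A + (-c⁻¹) • vecMulVec x f ∈ M :=
    mem_add_dir hA (M.direction.smul_mem _ hr)
  have hz : (A + (-c⁻¹) • vecMulVec x f).mulVec x' = 0 := by
    rw [add_mulVec, smul_mulVec, vecMulVec_mulVec', hx', ← hcdef]
    rw [smul_smul]
    field_simp
    simp
  have := unit_mulVec_eq_zero (hinv _ hC) hz
  rw [this] at hcdef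
  simp at hcdef
  exact hc hcdef

/-- L2 : pair orthogonality. -/
lemma L2 (hinv : ∀ A ∈ M, IsUnit A) {A : Matrix (Fin n) (Fin n) F} (hA : A ∈ M)
    {x f y g x' y' : Fin n → F} (hxf : vecMulVec x f ∈ M.direction)
    (hyg : vecMulVec y g ∈ M.direction)
    (hx' : A.mulVec x' = x) (hy' : A.mulVec y' = y) :
    (f ⬝ᵥ y') * (g ⬝ᵥ x') = 0 := by
  by_contra hc
  set φ := f ⬝ᵥ y' with hφdef
  set γ := g ⬝ᵥ x' with hγdef
  have hφ : φ ≠ 0 := fun h => hc (by rw [h, zero_mul])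
  have hγ : γ ≠ 0 := fun h => hc (by rw [h, mul_zero])
  have hfx' : f ⬝ᵥ x' = 0 := L1 hinv hA hxf hx'
  have hgy' : g ⬝ᵥ y' = 0 := L1 hinv hA hyg hy'
  set w := y' - φ • x' with hwdef
  have hw : w ≠ 0 := by
    intro h
    have hy'eq : y' = φ • x' := by
      have h2 := sub_eq_zero.1 (hwdef ▸ h : y' - φ • x' = 0)
      exact h2
    rw [hy'eq] at hgy'
    rw [dotProduct_smul, smul_eq_mul, ← hγdef] at hgy'
    exact hc hgy'
  have hC : A + vecMulVec x f + (φ * γ)⁻¹ • vecMulVec y g ∈ M :=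
    mem_add_dir (mem_add_dir hA hxf) (M.direction.smul_mem _ hyg)
  have hfw : f ⬝ᵥ w = φ := by
    rw [hwdef, dotProduct_sub, dotProduct_smul, hfx', smul_eq_mul, mul_zero, sub_zero]
  have hgw : g ⬝ᵥ w = -(φ * γ) := by
    rw [hwdef, dotProduct_sub, dotProduct_smul, hgy', smul_eq_mul, ← hγdef]
    ring
  have hz : (A + vecMulVec x f + (φ * γ)⁻¹ • vecMulVec y g).mulVec w = 0 := by
    rw [add_mulVec, add_mulVec, smul_mulVec, vecMulVec_mulVec', vecMulVec_mulVec',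
      hfw, hgw, hwdef, mulVec_sub]
    rw [mulVec_smul]
    rw [hx', hy', smul_smul]
    have hne : φ * γ ≠ 0 := mul_ne_zero hφ hγ
    rw [inv_mul_eq_div, neg_div, div_self hne]
    module
  have := unit_mulVec_eq_zero (hinv _ hC) hz
  exact hw this

/-- dot product as a linear functional -/
def dpl (f : Fin n → F) : (Fin n → F) →ₗ[F] F where
  toFun := fun u => f ⬝ᵥ u
  map_add' := by intros; simp [dotProduct_add]
  map_smul' := by intros; simp [dotProduct_smul]

lemma dpl_ne_zero {f : Fin n → F} (hf : f ≠ 0) : dpl f ≠ 0 := by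
  obtain ⟨j, hj⟩ := Function.ne_iff.1 hf
  intro h
  apply hj
  have := LinearMap.congr_fun h (Pi.single j 1)
  simpa [dpl, dotProduct, Pi.single_apply] using this

lemma exists_K_zero {n : ℕ} {M : AffineSubspace F (Matrix (Fin (n+1)) (Fin (n+1)) F)}
    (hne : (M : Set (Matrix (Fin (n+1)) (Fin (n+1)) F)).Nonempty)
    (hinv : ∀ A ∈ M, IsUnit A) :
    ∃ x : Fin (n+1) → F, x ≠ 0 ∧ ∀ f, Matrix.vecMulVec x f ∈ M.direction → f = 0 := by
  obtain ⟨A₀, hA₀⟩ := hne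
  by_contra hcon
  push_neg at hcon
  have h' : ∀ x' : Fin (n+1) → F, x' ∉ (⊥ : Submodule F (Fin (n+1) → F)) →
      ∃ f, Matrix.vecMulVec (A₀.mulVec x') f ∈ M.direction ∧ f ≠ 0 := by
    intro x' hx'
    have hx'0 : x' ≠ 0 := by simpa using hx'
    have hx : A₀.mulVec x' ≠ 0 := fun hz => hx'0 (unit_mulVec_eq_zero (hinv _ hA₀) hz)
    obtain ⟨f, hf1, hf2⟩ := hcon _ hx
    exact ⟨f, hf1, hf2⟩
  choose f hfmem hf0 using h'
  refine lemR F (finrank F (Fin (n+1) → F)) (Fin (n+1) → F) rfl ⊥ bot_ne_top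
    (fun x' hx' => dpl (f x' hx')) (fun x' hx' => dpl_ne_zero (hf0 x' hx'))
    (fun x' hx' => ?_) (fun x' hx' y' hy' => ?_)
  · exact L1 hinv hA₀ (hfmem x' hx') rfl
  · exact L2 hinv hA₀ (hfmem x' hx') (hfmem y' hy') rfl rfl

section MAIN
variable {F : Type} [Field F]

theorem main_bound : ∀ (n : ℕ) (M : AffineSubspace F (Matrix (Fin n) (Fin n) F)),
    (M : Set (Matrix (Fin n) (Fin n) F)).Nonempty → (∀ A ∈ M, IsUnit A) →
    finrank F M.direction ≤ n.choose 2 := by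
  intro n
  induction n with
  | zero =>
    intro M hne hinv
    have : Subsingleton (Matrix (Fin 0) (Fin 0) F) := by
      constructor; intro a b; ext i j; exact absurd i.2 (by omega)
    have h0 : finrank F (Matrix (Fin 0) (Fin 0) F) = 0 := finrank_zero_of_subsingleton
    have := Submodule.finrank_le M.direction
    omega
  | succ m IH =>
    intro M hne hinv
    obtain ⟨x, hx0, hKx⟩ := exists_K_zero hne hinv
    obtain ⟨A₀, hA₀⟩ := hne
    obtain ⟨u, hu⟩ := hinv A₀ hA₀
    set A₀' : Matrix (Fin (m+1)) (Fin (m+1)) F := ↑u⁻¹ with hA₀'def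
    have huu' : A₀ * A₀' = 1 := by rw [hA₀'def, ← hu]; exact u.mul_inv
    have hu'u : A₀' * A₀ = 1 := by rw [hA₀'def, ← hu]; exact u.inv_mul
    set v₀ := A₀'.mulVec x with hv₀def
    have hAv₀ : A₀.mulVec v₀ = x := by
      rw [hv₀def, mulVec_mulVec, huu', one_mulVec]
    have hv₀0 : v₀ ≠ 0 := by
      intro h
      exact hx0 (by rw [← hAv₀, h, mulVec_zero])
    set V := M.direction with hVdef
    -- evaluation map at v₀
    set φ : Matrix (Fin (m+1)) (Fin (m+1)) F →ₗ[F] (Fin (m+1) → F) :=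
      { toFun := fun B => B.mulVec v₀
        map_add' := fun A B => add_mulVec A B v₀
        map_smul' := fun c A => smul_mulVec c A v₀ } with hφdef
    -- rank-nullity
    have hrn := LinearMap.finrank_range_add_finrank_ker (φ.domRestrict V)
    rw [LinearMap.range_domRestrict] at hrn
    -- Bound 1 : finrank (V.map φ) ≤ m
    have hmapne : Submodule.map φ V ≠ ⊤ := by
      intro htop
      have hmem : -x ∈ Submodule.map φ V := htop ▸ Submodule.mem_top
      obtain ⟨B, hBV, hBx⟩ := hmem
      have hCM : A₀ + B ∈ M := mem_add_dir hA₀ hBV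
      have hz : (A₀ + B).mulVec v₀ = 0 := by
        rw [add_mulVec, hAv₀]
        have : B.mulVec v₀ = -x := hBx
        rw [this]; simp
      exact hv₀0 (unit_mulVec_eq_zero (hinv _ hCM) hz)
    have hb1 : finrank F (Submodule.map φ V) ≤ m := by
      have := Submodule.finrank_lt hmapne
      rw [Module.finrank_fin_fun] at this
      omega
    -- the kernel submodule
    set Wm : Submodule F (Matrix (Fin (m+1)) (Fin (m+1)) F) := V ⊓ LinearMap.ker φ with hWmdef
    have hkerfr : finrank F (LinearMap.ker (φ.domRestrict V)) = finrank F Wm := by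
      rw [LinearMap.ker_domRestrict]
      have hcomap : Submodule.comap V.subtype (LinearMap.ker φ) = Submodule.comap V.subtype Wm := by
        rw [hWmdef, Submodule.comap_inf]
        simp [Submodule.comap_subtype_self]
      rw [hcomap]
      exact (Submodule.comapSubtypeEquivOfLe inf_le_left).finrank_eq
    -- bases adapted to v₀ and x
    obtain ⟨b, hb⟩ := exists_basis_zero hv₀0
    obtain ⟨c, hc⟩ := exists_basis_zero hx0
    -- deletion of first row and column
    set DelL : Matrix (Fin (m+1)) (Fin (m+1)) F →ₗ[F] Matrix (Fin m) (Fin m) F :=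
      { toFun := fun A => A.submatrix Fin.succ Fin.succ
        map_add' := fun A B => rfl
        map_smul' := fun r A => rfl } with hDelLdef
    have hDelmul : ∀ S T : Matrix (Fin (m+1)) (Fin (m+1)) F,
        (∀ i : Fin m, S i.succ 0 = 0) → DelL (S * T) = DelL S * DelL T := by
      intro S T hS
      ext i j
      show (S * T) i.succ j.succ = _
      rw [Matrix.mul_apply, Fin.sum_univ_succ, hS i, zero_mul, zero_add]
      rfl
    have hDelone : DelL 1 = 1 := by
      ext i j
      show (1 : Matrix (Fin (m+1)) (Fin (m+1)) F) i.succ j.succ = (1 : Matrix (Fin m) (Fin m) F) i j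
      simp [Matrix.one_apply, Fin.succ_inj]
    -- Ψ
    set T : Matrix (Fin (m+1)) (Fin (m+1)) F →ₗ[F]
        Matrix (Fin (m+1)) (Fin (m+1)) F :=
      (LinearMap.toMatrix b c).toLinearMap ∘ₗ (Matrix.toLin' :
        Matrix (Fin (m+1)) (Fin (m+1)) F ≃ₗ[F] _).toLinearMap with hTdef
    set Ψ : Matrix (Fin (m+1)) (Fin (m+1)) F →ₗ[F] Matrix (Fin m) (Fin m) F :=
      DelL ∘ₗ T with hΨdef
    have hTapp : ∀ (A : Matrix (Fin (m+1)) (Fin (m+1)) F) (i j : Fin (m+1)),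
        T A i j = c.repr (A.mulVec (b j)) i := by
      intro A i j
      simp [hTdef, LinearMap.toMatrix_apply, Matrix.toLin'_apply]
    -- first columns
    have hScol : ∀ (A : Matrix (Fin (m+1)) (Fin (m+1)) F), A.mulVec v₀ = x →
        ∀ i, T A i 0 = if (0 : Fin (m+1)) = i then 1 else 0 := by
      intro A hA i
      rw [hTapp, hb, hA, ← hc, Basis.repr_self]
      exact Finsupp.single_apply
    -- (a) invertibility of Ψ images
    have hunit : ∀ B ∈ Wm, IsUnit (Ψ (A₀ + B)) := by
      intro B hB
      have hBV : B ∈ V := hB.1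
      have hBk : B.mulVec v₀ = 0 := hB.2
      set A := A₀ + B with hAdef
      have hAM : A ∈ M := mem_add_dir hA₀ hBV
      have hAv : A.mulVec v₀ = x := by rw [hAdef, add_mulVec, hAv₀, hBk, add_zero]
      obtain ⟨w, hw⟩ := hinv A hAM
      set A'' : Matrix (Fin (m+1)) (Fin (m+1)) F := ↑w⁻¹ with hA''def
      have hA1 : A * A'' = 1 := by rw [hA''def, ← hw]; exact w.mul_inv
      have hA2 : A'' * A = 1 := by rw [hA''def, ← hw]; exact w.inv_mul
      have hA''x : A''.mulVec x = v₀ := by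
        rw [← hAv, mulVec_mulVec, hA2, one_mulVec]
      set S := T A with hSdef
      set S' := LinearMap.toMatrix c b (Matrix.toLin' A'') with hS'def
      have hSS' : S * S' = 1 := by
        rw [hSdef, hS'def, hTdef]
        show (LinearMap.toMatrix b c) (Matrix.toLin' A) * _ = 1
        rw [← LinearMap.toMatrix_comp c b c, ← Matrix.toLin'_mul, hA1]
        simpa using LinearMap.toMatrix_id c
      have hS'S : S' * S = 1 := by
        rw [hSdef, hS'def, hTdef]
        show _ * (LinearMap.toMatrix b c) (Matrix.toLin' A) = 1
        rw [← LinearMap.toMatrix_comp b c b, ← Matrix.toLin'_mul, hA2]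
        simpa using LinearMap.toMatrix_id b
      have hScolA : ∀ i : Fin m, S i.succ 0 = 0 := by
        intro i
        rw [hSdef, hScol A hAv]
        simp [(Fin.succ_ne_zero i).symm]
      have hS'col : ∀ i : Fin m, S' i.succ 0 = 0 := by
        intro i
        rw [hS'def, LinearMap.toMatrix_apply, Matrix.toLin'_apply, hc, hA''x, ← hb,
          Basis.repr_self]
        rw [Finsupp.single_apply]
        simp [(Fin.succ_ne_zero i).symm]
      have h1 : DelL S * DelL S' = 1 := by rw [← hDelmul S S' hScolA, hSS', hDelone]
      have h2 : DelL S' * DelL S = 1 := by rw [← hDelmul S' S hS'col, hS'S, hDelone]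
      have : Ψ A = DelL S := by rw [hΨdef]; rfl
      rw [this]
      exact isUnit_iff_exists.2 ⟨DelL S', h1, h2⟩
    -- (b) injectivity of Ψ on Wm
    have hinj : ∀ B ∈ Wm, Ψ B = 0 → B = 0 := by
      intro B hB hΨB
      have hBV : B ∈ V := hB.1
      have hBk : B.mulVec v₀ = 0 := hB.2
      have hTBcol : ∀ i, T B i 0 = 0 := by
        intro i
        rw [hTapp, hb, hBk]
        simp
      have hTBdel : ∀ i j : Fin m, T B i.succ j.succ = 0 := by
        intro i j
        have : DelL (T B) = 0 := hΨB
        exact congrFun (congrFun this i) j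
      -- B's action on the basis b
      have hBb : ∀ j, B.mulVec (b j) = (T B 0 j) • x := by
        intro j
        have h1 : Matrix.toLin' B = Matrix.toLin b c (T B) := by
          rw [hTdef]
          show _ = Matrix.toLin b c ((LinearMap.toMatrix b c) (Matrix.toLin' B))
          rw [Matrix.toLin_toMatrix]
        have h2 : B.mulVec (b j) = Matrix.toLin' B (b j) := (Matrix.toLin'_apply B (b j)).symm
        rw [h2, h1, Matrix.toLin_self]
        rw [Fin.sum_univ_succ, hc]
        have hzero : ∀ i : Fin m, T B i.succ j • c i.succ = 0 := by
          intro i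
          rcases Fin.eq_zero_or_eq_succ j with hj | ⟨j', hj⟩
          · rw [hj]
            have := hTBcol i.succ
            rw [this, zero_smul]
          · rw [hj, hTBdel i j', zero_smul]
        rw [Finset.sum_eq_zero (fun i _ => hzero i), add_zero]
      -- express B as a rank one matrix x ⬝ g'
      set ℓ : (Fin (m+1) → F) →ₗ[F] F :=
        (Finsupp.lapply 0) ∘ₗ (c.repr.toLinearMap) ∘ₗ (Matrix.toLin' B) with hℓdef
      have hBsm : Matrix.toLin' B = LinearMap.smulRight ℓ x := by
        apply b.ext
        intro j
        rw [LinearMap.smulRight_apply]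
        have h3 : Matrix.toLin' B (b j) = (T B 0 j) • x := by
          rw [Matrix.toLin'_apply]; exact hBb j
        rw [h3, hℓdef]
        simp only [LinearMap.comp_apply, LinearEquiv.coe_toLinearMap, Finsupp.lapply_apply]
        rw [h3, _root_.map_smul]
        have : c.repr x 0 = 1 := by rw [← hc, Basis.repr_self]; simp
        rw [Finsupp.smul_apply, this]
        simp
      set g' : Fin (m+1) → F := fun j => ℓ (Pi.single j 1) with hg'def
      have hBvmv : B = vecMulVec x g' := by
        ext i j
        have h4 : B.mulVec (Pi.single j 1) = ℓ (Pi.single j 1) • x := by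
          have h6 := LinearMap.congr_fun hBsm (Pi.single j 1)
          rw [Matrix.toLin'_apply] at h6
          simpa using h6
        have h5 : B.mulVec (Pi.single j 1) i = B i j := by
          rw [mulVec_single]; simp
        rw [vecMulVec, Matrix.of_apply, hg'def]
        rw [← h5, h4]
        simp [mul_comm]
      have hg'0 : g' = 0 := hKx g' (by rw [← hBvmv]; exact hBV)
      rw [hBvmv, hg'0]
      ext i j
      simp [vecMulVec]
    -- finrank Wm = finrank (Wm.map Ψ)
    have hkerbot : LinearMap.ker (Ψ.domRestrict Wm) = ⊥ := by
      rw [Submodule.eq_bot_iff]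
      rintro ⟨B, hB⟩ hBk
      have : Ψ B = 0 := hBk
      have hB0 : B = 0 := hinj B hB this
      exact Subtype.ext hB0
    have hWmfr : finrank F Wm = finrank F (Submodule.map Ψ Wm) := by
      have := LinearMap.finrank_range_add_finrank_ker (Ψ.domRestrict Wm)
      rw [LinearMap.range_domRestrict, hkerbot] at this
      simp at this
      omega
    -- the image affine subspace
    set G : AffineSubspace F (Matrix (Fin (m+1)) (Fin (m+1)) F) := AffineSubspace.mk' A₀ Wm
      with hGdef
    set M' : AffineSubspace F (Matrix (Fin m) (Fin m) F) := G.map Ψ.toAffineMap with hM'def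
    have hM'ne : (M' : Set (Matrix (Fin m) (Fin m) F)).Nonempty := by
      refine ⟨Ψ A₀, ?_⟩
      rw [hM'def]
      exact ⟨A₀, AffineSubspace.self_mem_mk' A₀ Wm, rfl⟩
    have hM'inv : ∀ A' ∈ M', IsUnit A' := by
      intro A' hA'
      obtain ⟨A, hAG, rfl⟩ := hA'
      have hAG2 : A -ᵥ A₀ ∈ Wm := by
        have h7 : A ∈ AffineSubspace.mk' A₀ Wm := hAG
        exact (AffineSubspace.mem_mk').1 h7
      have : A = A₀ + (A - A₀) := by abel
      have hres := hunit (A - A₀) (by simpa [vsub_eq_sub] using hAG2)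
      rw [← this] at hres
      exact hres
    have hIH := IH M' hM'ne hM'inv
    have hM'dir : M'.direction = Submodule.map Ψ Wm := by
      rw [hM'def, AffineSubspace.map_direction]
      rw [hGdef, AffineSubspace.direction_mk']
      rfl
    rw [hM'dir] at hIH
    -- assemble
    have hV : finrank F V ≤ m + m.choose 2 := by
      rw [← hrn, hkerfr, hWmfr]
      omega
    have hchoose : (m+1).choose 2 = m + m.choose 2 := by
      rw [Nat.choose_succ_succ]
      rw [Nat.choose_one_right]
    rw [hchoose]
    exact hV

end MAIN
/-- Over any field F, an affine subspace of n×n matrices all of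
whose elements are invertible has dimension at most n(n-1)/2. -/
theorem stmt_9 (F : Type) [Field F] (n : ℕ) (hn : 0 < n)
    (M : AffineSubspace F (Matrix (Fin n) (Fin n) F))
    (hne : (M : Set (Matrix (Fin n) (Fin n) F)).Nonempty)
    (hinv : ∀ A ∈ M, IsUnit A) :
    Module.finrank F M.direction ≤ n * (n - 1) / 2 := by
  have h := main_bound n M hne hinv
  rwa [Nat.choose_two_right] at h
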